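/- Let P_N be the path graph on N ≥ 2 vertices, labeled so that vertices 1 and N are its two endpoints (of degree one), with adjacency matrix A. Let M = A + diag(1, 0, …, 0, 1), i.e., A with the (1,1) and (N,N) diagonal entries set to 1. Then M has N distinct real eigenvalues; one of them is 2 and, writing the remaining eigenvalues as λ₁, …, λ_{N−1}, one has (M − λ_{N−1}·I) ⋯ (M − λ₁·I) = 𝟙𝟙ᵀ. -/

import Mathlib

open Matrix

section PgscAux

open Finset Polynomial

lemma pgsc_prod_pow_roots (n : ℕ) (hn : 0 < n) (x : ℂ) :
    ∏ k ∈ Finset.range n, (x - Complex.exp (2 * Real.pi * Complex.I / n) ^ k) = x ^ n - 1 := by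
  set ζ := Complex.exp (2 * Real.pi * Complex.I / n) with hζdef
  have hζ := Complex.isPrimitiveRoot_exp n hn.ne'
  have hval : (Polynomial.nthRootsFinset n (1:ℂ)).val = (Multiset.range n).map (ζ ^ ·) := by
    rw [Polynomial.nthRootsFinset, Multiset.toFinset_val,
      Multiset.Nodup.dedup (hζ.nthRoots_one_nodup), hζ.nthRoots_eq (one_pow n)]
    simp
    rfl
  have h1 : ∏ η ∈ Polynomial.nthRootsFinset n (1:ℂ), (x - η) = x ^ n - 1 := by
    have := congrArg (Polynomial.eval x) (Polynomial.X_pow_sub_one_eq_prod hn hζ)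
    simp only [eval_sub, eval_pow, eval_X, eval_one, eval_prod, eval_C] at this
    exact this.symm
  rw [← h1]
  unfold Finset.prod
  rw [hval, Multiset.map_map, Finset.range_val]
  rfl

lemma pgsc_prod_one_sub_roots (n : ℕ) (hn : 0 < n) :
    ∏ k ∈ Finset.Ico 1 n, ((1:ℂ) - Complex.exp (2 * Real.pi * Complex.I / n) ^ k) = n := by
  set ζ := Complex.exp (2 * Real.pi * Complex.I / n) with hζdef
  set f : ℂ → ℂ := fun x => ∏ k ∈ Finset.Ico 1 n, (x - ζ ^ k) with hf
  set g : ℂ → ℂ := fun x => ∑ i ∈ Finset.range n, x ^ i with hg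
  have hfg : f = g := by
    apply Continuous.ext_on (dense_compl_singleton (1:ℂ))
    · exact continuous_finset_prod _ (fun k _ => by fun_prop)
    · exact continuous_finset_sum _ (fun k _ => by fun_prop)
    · intro x hx
      have hx1 : x - 1 ≠ 0 := sub_ne_zero.2 (by simpa using hx)
      have key : (x - 1) * f x = (x - 1) * g x := by
        have h0 := pgsc_prod_pow_roots n hn x
        rw [Finset.range_eq_Ico, Finset.prod_eq_prod_Ico_succ_bot hn] at h0
        simp only [pow_zero] at h0
        rw [hf, hg]
        simpa [mul_geom_sum] using h0
      exact mul_left_cancel₀ hx1 key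
  have := congrFun hfg 1
  simpa [hg] using this.trans (by simp [hg])

lemma pgsc_prod_key (n : ℕ) (hn : 2 ≤ n) :
    ∏ k ∈ Finset.Ico 1 n, (2 - 2 * Real.cos (k * Real.pi / n)) = n := by
  have hn0 : 0 < n := by omega
  have h2n : 0 < 2 * n := by omega
  set ζ : ℂ := Complex.exp (2 * Real.pi * Complex.I / (2 * n)) with hζdef
  have hζk : ∀ k : ℕ, ζ ^ k = Complex.exp ((k * Real.pi / n : ℝ) * Complex.I) := by
    intro k
    rw [hζdef, ← Complex.exp_nat_mul]
    congr 1
    push_cast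
    have : (n:ℂ) ≠ 0 := by exact_mod_cast hn0.ne'
    field_simp
  have htot := pgsc_prod_one_sub_roots (2*n) h2n
  have hsplit : Finset.Ico 1 (2*n) = Finset.Ico 1 n ∪ {n} ∪ Finset.Ico (n+1) (2*n) := by
    ext k
    simp [Finset.mem_Ico, Finset.mem_union]
    omega
  have hdisj1 : Disjoint (Finset.Ico 1 n ∪ {n}) (Finset.Ico (n+1) (2*n)) := by
    simp [Finset.disjoint_left, Finset.mem_Ico]
    omega
  have hdisj2 : Disjoint (Finset.Ico 1 n) ({n} : Finset ℕ) := by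
    simp [Finset.disjoint_left, Finset.mem_Ico]
    omega
  rw [hsplit, Finset.prod_union hdisj1, Finset.prod_union hdisj2] at htot
  have hζn : ζ ^ n = -1 := by
    rw [hζk n]
    have : ((n:ℝ) * Real.pi / n : ℝ) = Real.pi := by field_simp
    rw [this, Complex.exp_pi_mul_I]
  have hrefl : ∏ k ∈ Finset.Ico (n+1) (2*n), (1 - ζ ^ k)
      = ∏ k ∈ Finset.Ico 1 n, (1 - ζ ^ (2*n - k)) := by
    apply Finset.prod_nbij' (fun k => 2*n - k) (fun k => 2*n - k)
    · intro a ha; simp only [Finset.mem_Ico] at *; omega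
    · intro a ha; simp only [Finset.mem_Ico] at *; omega
    · intro a ha; simp only [Finset.mem_Ico] at ha; omega
    · intro a ha; simp only [Finset.mem_Ico] at ha; omega
    · intro a ha; simp only [Finset.mem_Ico] at ha
      congr 2
      omega
  have hpair : ∀ k ∈ Finset.Ico 1 n,
      (1 - ζ ^ k) * (1 - ζ ^ (2*n - k)) = ((2 - 2 * Real.cos (k * Real.pi / n) : ℝ) : ℂ) := by
    intro k hk
    simp only [Finset.mem_Ico] at hk
    set θ : ℝ := k * Real.pi / n with hθ
    have h1 : ζ ^ k = Complex.cos θ + Complex.sin θ * Complex.I := by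
      rw [hζk k, Complex.exp_mul_I]
    have h2 : ζ ^ (2*n - k) = Complex.cos θ - Complex.sin θ * Complex.I := by
      rw [hζk (2*n-k)]
      have he : ((((2*n - k : ℕ)) * Real.pi / n : ℝ) : ℂ) * Complex.I
          = (((2*Real.pi : ℝ)) : ℂ) * Complex.I + ((-θ : ℝ) : ℂ) * Complex.I := by
        have hkc : ((2*n - k : ℕ) : ℝ) = 2*(n:ℝ) - (k:ℝ) := by
          push_cast [Nat.cast_sub (by omega : k ≤ 2*n)]; ring
        push_cast [hkc, hθ]
        have : (n:ℂ) ≠ 0 := by exact_mod_cast hn0.ne'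
        field_simp
        ring
      rw [he, Complex.exp_add]
      have h2pi : Complex.exp ((((2*Real.pi : ℝ)) : ℂ) * Complex.I) = 1 := by
        simpa using Complex.exp_two_pi_mul_I
      rw [h2pi, one_mul, Complex.exp_mul_I]
      push_cast
      simp [Complex.cos_neg, Complex.sin_neg]
      ring
    rw [h1, h2]
    have hs := Complex.sin_sq_add_cos_sq ((θ : ℝ) : ℂ)
    push_cast [← Complex.ofReal_cos]
    simp only [Complex.ofReal_cos]
    linear_combination hs - Complex.sin ((θ:ℝ):ℂ)^2 * Complex.I_sq
  push_cast at htot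
  rw [← hζdef, Finset.prod_singleton, hζn, hrefl] at htot
  have hcomb : (∏ x ∈ Finset.Ico 1 n, (1 - ζ ^ x)) * ∏ k ∈ Finset.Ico 1 n, (1 - ζ ^ (2*n - k))
      = ((∏ k ∈ Finset.Ico 1 n, (2 - 2 * Real.cos (k * Real.pi / n)) : ℝ) : ℂ) := by
    rw [← Finset.prod_mul_distrib, Complex.ofReal_prod]
    exact Finset.prod_congr rfl hpair
  have : ((∏ k ∈ Finset.Ico 1 n, (2 - 2 * Real.cos (k * Real.pi / n)) : ℝ) : ℂ) * 2
      = ((2 * n : ℝ) : ℂ) := by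
    rw [← hcomb]
    push_cast
    linear_combination htot
  have h2 : (∏ k ∈ Finset.Ico 1 n, (2 - 2 * Real.cos (k * Real.pi / n)) : ℝ) * 2 = 2 * n := by
    exact_mod_cast this
  linarith

lemma pgsc_list_mulVec {n : ℕ} (M : Matrix (Fin n) (Fin n) ℝ) (μ : ℝ) (v : Fin n → ℝ)
    (hv : M.mulVec v = μ • v) (l : List ℝ) :
    ((l.map fun a => M - a • 1).prod).mulVec v = ((l.map fun a => μ - a).prod) • v := by
  induction l with
  | nil => simp [Matrix.one_mulVec]
  | cons a l ih =>
      simp only [List.map_cons, List.prod_cons, ← Matrix.mulVec_mulVec, ih,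
        Matrix.mulVec_smul, Matrix.sub_mulVec, Matrix.smul_mulVec, Matrix.one_mulVec, hv]
      funext i
      simp [smul_sub, mul_smul]
      ring

lemma pgsc_cos_rec (x y : ℝ) : Real.cos (x - y) + Real.cos (x + y) = 2 * Real.cos y * Real.cos x := by
  rw [Real.cos_sub, Real.cos_add]; ring

open scoped Classical in
lemma pgsc_MV {N : ℕ} (hN : 2 ≤ N) (u : Fin N → ℝ) (i : Fin N) :
    (((SimpleGraph.pathGraph N).adjMatrix ℝ +
      Matrix.diagonal (fun i : Fin N => if (i : ℕ) = 0 ∨ (i : ℕ) = N - 1 then (1:ℝ) else 0)).mulVec u) i =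
    (if h : (i:ℕ)+1 < N then u ⟨(i:ℕ)+1, h⟩ else u i) +
    (if _ : 0 < (i:ℕ) then u ⟨(i:ℕ)-1, Nat.lt_of_le_of_lt (Nat.sub_le _ _) i.isLt⟩ else u i) := by
  have hiN := i.isLt
  rw [Matrix.add_mulVec, Pi.add_apply, Matrix.mulVec_diagonal]
  simp only [Matrix.mulVec, dotProduct, SimpleGraph.adjMatrix_apply,
    SimpleGraph.pathGraph_adj]
  have hsummand : ∀ j : Fin N,
      (if ((i:ℕ)+1 = (j:ℕ) ∨ (j:ℕ)+1 = (i:ℕ)) then (1:ℝ) else 0) * u j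
      = (if ((j:ℕ) = (i:ℕ)+1) then u j else 0)
        + (if ((j:ℕ) = (i:ℕ)-1 ∧ 0 < (i:ℕ)) then u j else 0) := by
    intro j
    split_ifs <;> first | (exfalso; omega) | ring
  rw [Finset.sum_congr rfl (fun j _ => hsummand j), Finset.sum_add_distrib]
  have h1 : ∑ j : Fin N, (if ((j:ℕ) = (i:ℕ)+1) then u j else 0)
      = if h : (i:ℕ)+1 < N then u ⟨(i:ℕ)+1, h⟩ else 0 := by
    split_ifs with h
    · rw [Finset.sum_eq_single (⟨(i:ℕ)+1, h⟩ : Fin N)]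
      · simp
      · intro j _ hj
        rw [if_neg (fun hc => hj (Fin.ext hc))]
      · simp
    · apply Finset.sum_eq_zero
      intro j _
      rw [if_neg (by omega)]
  have h2 : ∑ j : Fin N, (if ((j:ℕ) = (i:ℕ)-1 ∧ 0 < (i:ℕ)) then u j else 0)
      = if _ : 0 < (i:ℕ) then u ⟨(i:ℕ)-1, Nat.lt_of_le_of_lt (Nat.sub_le _ _) i.isLt⟩ else 0 := by
    split_ifs with h
    · rw [Finset.sum_eq_single (⟨(i:ℕ)-1, Nat.lt_of_le_of_lt (Nat.sub_le _ _) i.isLt⟩ : Fin N)]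
      · simp [h]
      · intro j _ hj
        rw [if_neg (fun hc => hj (Fin.ext hc.1))]
      · simp
    · apply Finset.sum_eq_zero
      intro j _
      rw [if_neg (by omega)]
  rw [h1, h2]
  by_cases hi0 : (i:ℕ) = 0
  · simp only [dif_pos (show (i:ℕ)+1 < N by omega), dif_neg (show ¬ 0 < (i:ℕ) by omega),
      if_pos (Or.inl hi0)]
    ring
  by_cases hi1 : (i:ℕ) = N - 1
  · simp only [dif_neg (show ¬ (i:ℕ)+1 < N by omega), dif_pos (show 0 < (i:ℕ) by omega),
      if_pos (Or.inr hi1)]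
    ring
  · simp only [dif_pos (show (i:ℕ)+1 < N by omega), dif_pos (show 0 < (i:ℕ) by omega),
      if_neg (show ¬((i:ℕ) = 0 ∨ (i:ℕ) = N - 1) by omega)]
    ring

open scoped Classical in
lemma pgsc_EIG {N : ℕ} (hN : 2 ≤ N) (k : ℕ) :
    (((SimpleGraph.pathGraph N).adjMatrix ℝ +
      Matrix.diagonal (fun i : Fin N => if (i : ℕ) = 0 ∨ (i : ℕ) = N - 1 then (1:ℝ) else 0)).mulVec
      (fun j : Fin N => Real.cos ((2*(j:ℕ)+1) * (k * Real.pi / (2*N)))))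
    = (2 * Real.cos (k * Real.pi / N)) •
      (fun j : Fin N => Real.cos ((2*(j:ℕ)+1) * (k * Real.pi / (2*N)))) := by
  have hN0 : (0:ℝ) < N := by positivity
  set α : ℝ := k * Real.pi / (2*N) with hα
  set c : ℝ := 2 * Real.cos (k * Real.pi / N) with hc
  set W : ℝ → ℝ := fun x => Real.cos ((2*x+1) * α) with hW
  have hrec : ∀ x : ℝ, W (x-1) + W (x+1) = c * W x := by
    intro x
    have h2α : k * Real.pi / N = 2 * α := by rw [hα]; field_simp
    have e1 : (2*(x-1)+1) * α = (2*x+1)*α - 2*α := by ring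
    have e2 : (2*(x+1)+1) * α = (2*x+1)*α + 2*α := by ring
    rw [hW]
    simp only [e1, e2]
    rw [pgsc_cos_rec, hc, h2α]
  have hlow : W (-1) = W 0 := by
    show Real.cos ((2*(-1:ℝ)+1)*α) = Real.cos ((2*(0:ℝ)+1)*α)
    rw [show (2*(-1:ℝ)+1) * α = -((2*(0:ℝ)+1)*α) by ring, Real.cos_neg]
  have hhigh : W N = W ((N:ℝ)-1) := by
    have e1 : (2*(N:ℝ)+1) * α = k * Real.pi + α := by rw [hα]; field_simp
    have e2 : (2*((N:ℝ)-1)+1) * α = k * Real.pi - α := by rw [hα]; field_simp; ring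
    rw [hW]
    simp only [e1, e2]
    rw [Real.cos_add, Real.cos_sub, Real.sin_nat_mul_pi]
    ring
  funext i
  have hiN := i.isLt
  rw [pgsc_MV hN]
  have hval : ∀ m : ℕ, Real.cos ((2*(m:ℝ)+1) * α) = W ((m:ℝ)) := fun m => rfl
  show _ = c * Real.cos ((2*((i:ℕ):ℝ)+1) * α)
  rw [hval (i:ℕ)]
  by_cases hi0 : (i:ℕ) = 0
  · simp only [dif_pos (show (i:ℕ)+1 < N by omega), dif_neg (show ¬ 0 < (i:ℕ) by omega)]
    rw [hval ((i:ℕ)+1)]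
    have h1 : ((((i:ℕ)+1 : ℕ)):ℝ) = ((i:ℕ):ℝ) + 1 := by push_cast; ring
    rw [h1]
    have := hrec ((i:ℕ):ℝ)
    rw [show ((i:ℕ):ℝ) - 1 = -1 by rw [hi0]; norm_num] at this
    rw [hlow] at this
    rw [show ((i:ℕ):ℝ) = 0 from by rw [hi0]; norm_num] at this ⊢
    linarith [this]
  by_cases hi1 : (i:ℕ) = N - 1
  · simp only [dif_neg (show ¬ (i:ℕ)+1 < N by omega), dif_pos (show 0 < (i:ℕ) by omega)]
    rw [hval ((i:ℕ)-1)]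
    have h1 : ((((i:ℕ)-1 : ℕ)):ℝ) = ((i:ℕ):ℝ) - 1 := by
      push_cast [Nat.cast_sub (show 1 ≤ (i:ℕ) by omega)]; ring
    rw [h1]
    have hiNR : ((i:ℕ):ℝ) = (N:ℝ) - 1 := by
      rw [hi1]; push_cast [Nat.cast_sub (show 1 ≤ N by omega)]; ring
    have := hrec ((i:ℕ):ℝ)
    rw [show ((i:ℕ):ℝ) + 1 = (N:ℝ) by rw [hiNR]; ring] at this
    rw [hhigh, ← hiNR] at this
    linarith [this]
  · simp only [dif_pos (show (i:ℕ)+1 < N by omega), dif_pos (show 0 < (i:ℕ) by omega)]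
    rw [hval ((i:ℕ)+1), hval ((i:ℕ)-1)]
    have h1 : ((((i:ℕ)+1 : ℕ)):ℝ) = ((i:ℕ):ℝ) + 1 := by push_cast; ring
    have h2 : ((((i:ℕ)-1 : ℕ)):ℝ) = ((i:ℕ):ℝ) - 1 := by
      push_cast [Nat.cast_sub (show 1 ≤ (i:ℕ) by omega)]; ring
    rw [h1, h2]
    linarith [hrec ((i:ℕ):ℝ)]

end PgscAux

open scoped Classical in
/-- For the path graph on `N ≥ 2` vertices with adjacency matrix `A`, the
matrix `M = A + diag(1,0,…,0,1)` has `N` distinct real eigenvalues, one of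
which is `2`, and the product of the factors `M - λ·I` over the `N - 1`
remaining eigenvalues `λ` equals the all-ones matrix `𝟙𝟙ᵀ`. -/
theorem path_graph_shifted_adjacency_consensus {N : ℕ} (hN : 2 ≤ N)
    (M : Matrix (Fin N) (Fin N) ℝ)
    (hMdef : M = (SimpleGraph.pathGraph N).adjMatrix ℝ +
      Matrix.diagonal (fun i : Fin N => if (i : ℕ) = 0 ∨ (i : ℕ) = N - 1 then (1 : ℝ) else 0)) :
    ∃ lam : Fin (N - 1) → ℝ, Function.Injective lam ∧ (∀ t, lam t ≠ 2) ∧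
      {μ : ℝ | ∃ v : Fin N → ℝ, v ≠ 0 ∧ M.mulVec v = μ • v} = insert 2 (Set.range lam) ∧
      (List.ofFn fun t : Fin (N - 1) => M - lam t • 1).reverse.prod =
        Matrix.of (fun _ _ => (1 : ℝ)) := by
  have hN0 : (0:ℝ) < N := by positivity
  have hπ := Real.pi_pos
  set v : ℕ → Fin N → ℝ :=
    fun k => (fun j : Fin N => Real.cos ((2*(j:ℕ)+1) * (k * Real.pi / (2*N)))) with hv
  set ev : ℕ → ℝ := fun k => 2 * Real.cos (k * Real.pi / N) with hev
  have hEIG : ∀ k : ℕ, M.mulVec (v k) = ev k • v k := by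
    intro k
    rw [hMdef]
    exact pgsc_EIG hN k
  have hv0 : v 0 = fun _ => (1:ℝ) := by
    funext j
    simp [hv]
  have hev0 : ev 0 = 2 := by simp [hev]
  have hinj : ∀ k l : ℕ, k ≤ N → l ≤ N → ev k = ev l → k = l := by
    intro k l hk hl h
    have hmem : ∀ m : ℕ, m ≤ N → ((m:ℝ) * Real.pi / N : ℝ) ∈ Set.Icc 0 Real.pi := by
      intro m hm
      constructor
      · positivity
      · rw [div_le_iff₀ hN0]
        have : (m:ℝ) ≤ N := by exact_mod_cast hm
        nlinarith
    have hcc : Real.cos ((k:ℝ) * Real.pi / N) = Real.cos ((l:ℝ) * Real.pi / N) := by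
      have := h
      simp only [hev] at this
      linarith
    have := Real.injOn_cos (hmem k hk) (hmem l hl) hcc
    field_simp at this
    exact_mod_cast this
  have hvne : ∀ k : ℕ, k < N → v k ≠ 0 := by
    intro k hk h0
    have hpos : 0 < Real.cos ((k:ℝ) * Real.pi / (2*N)) := by
      apply Real.cos_pos_of_mem_Ioo
      constructor
      · have : 0 ≤ (k:ℝ) * Real.pi / (2*N) := by positivity
        linarith
      · rw [div_lt_iff₀ (by positivity)]
        have : (k:ℝ) < N := by exact_mod_cast hk
        nlinarith
    have := congrFun h0 ⟨0, by omega⟩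
    simp only [hv, Pi.zero_apply] at this
    norm_num at this
    rw [this] at hpos
    norm_num at hpos
  have hrow : ∀ i : Fin N, ∑ j, M i j = 2 := by
    intro i
    have := congrFun (hEIG 0) i
    rw [hv0, hev0] at this
    simp only [Matrix.mulVec, dotProduct, mul_one, Pi.smul_apply, smul_eq_mul] at this
    simpa using this
  have hsym : Mᵀ = M := by
    rw [hMdef]
    rw [Matrix.transpose_add, Matrix.diagonal_transpose, SimpleGraph.transpose_adjMatrix]
  have hcol : ∀ j : Fin N, ∑ i, M i j = 2 := by
    intro j
    have : ∀ i : Fin N, M i j = M j i := by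
      intro i
      conv_lhs => rw [← hsym]
      rfl
    rw [Finset.sum_congr rfl (fun i _ => this i)]
    exact hrow j
  have hsum0 : ∀ (μ : ℝ) (u : Fin N → ℝ), M.mulVec u = μ • u → μ ≠ 2 → ∑ j, u j = 0 := by
    intro μ u hu hμ
    have h1 : ∑ i, (M.mulVec u) i = μ * ∑ j, u j := by
      rw [hu]
      simp [Finset.mul_sum]
    have h2 : ∑ i, (M.mulVec u) i = 2 * ∑ j, u j := by
      simp only [Matrix.mulVec, dotProduct]
      rw [Finset.sum_comm]
      rw [Finset.mul_sum]
      apply Finset.sum_congr rfl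
      intro j _
      rw [← Finset.sum_mul, hcol j]
    have h3 : (μ - 2) * ∑ j, u j = 0 := by linarith
    rcases mul_eq_zero.1 h3 with h | h
    · exact absurd (by linarith : μ = 2) hμ
    · exact h
  haveI : Nonempty (Fin N) := ⟨⟨0, by omega⟩⟩
  set lam : Fin (N-1) → ℝ := fun t => ev ((t:ℕ)+1) with hlam
  have hlaminj : Function.Injective lam := by
    intro a b h
    have ha := a.isLt
    have hb := b.isLt
    have := hinj ((a:ℕ)+1) ((b:ℕ)+1) (by omega) (by omega) h
    exact Fin.ext (by omega)
  have hlamne2 : ∀ t, lam t ≠ 2 := by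
    intro t h
    have ht := t.isLt
    have := hinj ((t:ℕ)+1) 0 (by omega) (by omega) (by rw [hev0]; exact h)
    omega
  have hEVinj : Function.Injective (fun k : Fin N => ev (k:ℕ)) := by
    intro a b h
    exact Fin.ext (hinj _ _ (le_of_lt a.isLt) (le_of_lt b.isLt) h)
  have heig : ∀ k : Fin N, Module.End.HasEigenvector
      (Matrix.mulVecLin M : Module.End ℝ (Fin N → ℝ)) (ev (k:ℕ)) (v (k:ℕ)) := by
    intro k
    constructor
    · rw [Module.End.mem_eigenspace_iff]
      simpa [Matrix.mulVecLin_apply] using hEIG (k:ℕ)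
    · exact hvne (k:ℕ) k.isLt
  have hli : LinearIndependent ℝ (fun k : Fin N => v (k:ℕ)) :=
    Module.End.eigenvectors_linearIndependent' (Matrix.mulVecLin M)
      (fun k : Fin N => ev (k:ℕ)) hEVinj _ heig
  have hcard : Fintype.card (Fin N) = Module.finrank ℝ (Fin N → ℝ) := by
    simp [Module.finrank_fintype_fun_eq_card]
  set b : Module.Basis (Fin N) ℝ (Fin N → ℝ) := basisOfLinearIndependentOfCardEqFinrank hli hcard
    with hbdef
  have hb : ⇑b = fun k : Fin N => v (k:ℕ) :=
    coe_basisOfLinearIndependentOfCardEqFinrank hli hcard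
  have hlist : ∀ (μ : ℝ) (u : Fin N → ℝ), M.mulVec u = μ • u →
      ((List.ofFn fun t : Fin (N-1) => M - lam t • 1).reverse.prod).mulVec u
        = (∏ t : Fin (N-1), (μ - lam t)) • u := by
    intro μ u hu
    have h1 : (List.ofFn fun t : Fin (N-1) => M - lam t • 1).reverse
        = ((List.ofFn lam).reverse).map (fun a => M - a • 1) := by
      rw [List.map_reverse, List.map_ofFn]
      rfl
    rw [h1, pgsc_list_mulVec M μ u hu]
    congr 1
    rw [List.map_reverse, List.prod_reverse, List.map_ofFn, List.prod_ofFn]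
    rfl
  have hprod : ∏ t : Fin (N-1), ((2:ℝ) - lam t) = N := by
    have hkey := pgsc_prod_key N hN
    rw [Finset.prod_Ico_eq_prod_range] at hkey
    rw [show (fun t : Fin (N-1) => (2:ℝ) - lam t)
        = fun t : Fin (N-1) => (fun i : ℕ => 2 - ev (i+1)) (t:ℕ) from rfl]
    rw [Fin.prod_univ_eq_prod_range (fun i : ℕ => 2 - ev (i+1)) (N-1)]
    rw [← hkey]
    apply Finset.prod_congr rfl
    intro i _
    rw [hev]
    norm_num
    ring_nf
  set J : Matrix (Fin N) (Fin N) ℝ := Matrix.of (fun _ _ => (1:ℝ)) with hJ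
  have hJmul : ∀ u : Fin N → ℝ, J.mulVec u = (∑ j, u j) • (fun _ => (1:ℝ)) := by
    intro u
    funext i
    simp [hJ, Matrix.mulVec, dotProduct]
  have hRJ : (List.ofFn fun t : Fin (N-1) => M - lam t • 1).reverse.prod = J := by
    apply Matrix.toLin'.injective
    apply b.ext
    intro k
    rw [Matrix.toLin'_apply, Matrix.toLin'_apply]
    have hbk : b k = v (k:ℕ) := by rw [hb]
    rw [hbk, hlist (ev (k:ℕ)) (v (k:ℕ)) (hEIG (k:ℕ)), hJmul]
    by_cases hk : (k:ℕ) = 0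
    · rw [hk, hv0, hev0, hprod]
      congr 1
      simp
    · have hz : (∏ t : Fin (N-1), (ev (k:ℕ) - lam t)) = 0 := by
        apply Finset.prod_eq_zero
          (Finset.mem_univ (⟨(k:ℕ)-1, by have := k.isLt; omega⟩ : Fin (N-1)))
        show ev (k:ℕ) - ev (((k:ℕ)-1)+1) = 0
        rw [show ((k:ℕ)-1)+1 = (k:ℕ) by omega]
        ring
      have hs : ∑ j, v (k:ℕ) j = 0 := by
        apply hsum0 (ev (k:ℕ)) _ (hEIG (k:ℕ))
        rw [← hev0]
        intro h
        exact hk (hinj (k:ℕ) 0 (le_of_lt k.isLt) (by omega) h)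
      rw [hz, hs]
      simp
  refine ⟨lam, hlaminj, hlamne2, ?_, hRJ⟩
  ext μ
  simp only [Set.mem_setOf_eq, Set.mem_insert_iff, Set.mem_range]
  constructor
  · rintro ⟨u, hu0, huE⟩
    have hzero : (M - (2:ℝ) • 1) * J = 0 := by
      ext i j
      simp only [Matrix.mul_apply, Matrix.sub_apply, Matrix.smul_apply, Matrix.one_apply,
        hJ, Matrix.of_apply, Matrix.zero_apply, smul_eq_mul]
      have hterm : ∀ x : Fin N, (M i x - 2 * (if i = x then (1:ℝ) else 0)) * 1
          = M i x - (if i = x then 2 else 0) := by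
        intro x
        split_ifs <;> ring
      rw [Finset.sum_congr rfl (fun x _ => hterm x), Finset.sum_sub_distrib, hrow i]
      simp
    have happ : ((M - (2:ℝ) • 1) *
        ((List.ofFn fun t : Fin (N-1) => M - lam t • 1).reverse.prod)).mulVec u
        = ((μ - 2) * ∏ t : Fin (N-1), (μ - lam t)) • u := by
      rw [← Matrix.mulVec_mulVec, hlist μ u huE, Matrix.mulVec_smul, Matrix.sub_mulVec,
        Matrix.smul_mulVec, Matrix.one_mulVec, huE]
      funext i
      simp [mul_smul, smul_sub]
      ring
    rw [hRJ, hzero, Matrix.zero_mulVec] at happ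
    have hco : ((μ - 2) * ∏ t : Fin (N-1), (μ - lam t)) = 0 := by
      by_contra hc
      exact hu0 ((smul_eq_zero.1 happ.symm).resolve_left hc)
    rcases mul_eq_zero.1 hco with h | h
    · exact Or.inl (by linarith)
    · obtain ⟨t, _, ht⟩ := Finset.prod_eq_zero_iff.1 h
      exact Or.inr ⟨t, by linarith⟩
  · rintro (rfl | ⟨t, rfl⟩)
    · exact ⟨v 0, hvne 0 (by omega), by rw [hEIG 0, hev0]⟩
    · exact ⟨v ((t:ℕ)+1), hvne _ (by have := t.isLt; omega), hEIG ((t:ℕ)+1)⟩
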